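/- arXiv:1608.04918 — 3 statements merged into one kernel-verified Lean document; each statement's English description precedes it below -/
import Mathlib

section
/- Given f ∈ L²(m) and α > 0, the function j(t,·) := 𝒥^α_t f is the unique L²(m)-valued solution of the Cauchy problem dj/dt = -U^α j with j(0,·) = U^α f, where U^α = ∫₀^∞ (λ+α)^{-1} dE_λ is the resolvent operator. -/
open MeasureTheory Real

/-- Elementary Taylor-type estimate for `exp (-x)`. -/
lemma exp_taylor_bound {x y : ℝ} (hx : 0 ≤ x) (hy : 0 ≤ y) :
    |Real.exp (-x) - Real.exp (-y) + (x - y) * Real.exp (-y)| ≤ (x - y) ^ 2 := by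
  rw [abs_le]
  have hex : Real.exp (-x) ≤ 1 := Real.exp_le_one_iff.mpr (by linarith)
  have hey : Real.exp (-y) ≤ 1 := Real.exp_le_one_iff.mpr (by linarith)
  have hpx := Real.exp_pos (-x)
  have hpy := Real.exp_pos (-y)
  constructor
  · -- lower bound: convexity
    have h1 : (y - x) + 1 ≤ Real.exp (y - x) := Real.add_one_le_exp _
    have h2 : Real.exp (y - x) * Real.exp (-y) = Real.exp (-x) := by
      rw [← Real.exp_add]; ring_nf
    nlinarith [sq_nonneg (x - y), mul_le_mul_of_nonneg_right h1 hpy.le]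
  · rcases le_total y x with h | h
    · -- x ≥ y, h := x - y ≥ 0
      set d := x - y with hd
      have hd0 : 0 ≤ d := by linarith
      have hsplit : Real.exp (-x) = Real.exp (-d) * Real.exp (-y) := by
        rw [← Real.exp_add, hd]; ring_nf
      have h1 : (-d) + 1 ≤ Real.exp (-d) := Real.add_one_le_exp _
      have h2 : d + 1 ≤ Real.exp d := Real.add_one_le_exp _
      have h3 : Real.exp (-d) * Real.exp d = 1 := by
        rw [← Real.exp_add]; simp
      have hpd := Real.exp_pos (-d)
      have hpd' := Real.exp_pos d
      -- exp(-d) ≤ 1 - d + d^2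
      have h4 : Real.exp (-d) ≤ 1 - d + d ^ 2 := by
        nlinarith [sq_nonneg d, sq_nonneg (d - 1)]
      -- goal : exp(-x) - exp(-y) + d * exp(-y) ≤ d^2
      have h5 : Real.exp (-d) - 1 + d ≥ 0 := by linarith
      nlinarith [mul_le_mul_of_nonneg_right h4 hpy.le]
    · -- y ≥ x
      set d := y - x with hd
      have hd0 : 0 ≤ d := by linarith
      have hsplit : Real.exp (-y) = Real.exp (-d) * Real.exp (-x) := by
        rw [← Real.exp_add, hd]; ring_nf
      have h1 : (-d) + 1 ≤ Real.exp (-d) := Real.add_one_le_exp _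
      have hpd := Real.exp_pos (-d)
      -- goal : exp(-x) - exp(-y) - d * exp(-y) ≤ d^2
      -- = exp(-x) * (1 - (1+d) exp(-d)) ≤ 1 - (1+d)(1-d) = d^2
      have h2 : (1 + d) * Real.exp (-d) ≥ 1 - d ^ 2 := by nlinarith
      have h3 : 1 - (1 + d) * Real.exp (-d) ≤ d ^ 2 := by linarith
      have h4 : 0 ≤ 1 - (1 + d) * Real.exp (-d) := by
        have := Real.add_one_le_exp d
        have h3' : Real.exp (-d) * Real.exp d = 1 := by rw [← Real.exp_add]; simp
        nlinarith
      nlinarith [mul_le_mul_of_nonneg_right hex h4, hsplit]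

/-- Norm comparison in `L²` from an a.e. pointwise bound. -/
lemma Lp_norm_le_of_ae_le {Ω : Type*} [MeasurableSpace Ω] {μ : Measure Ω}
    (g h : Lp ℝ 2 μ) {C : ℝ} (hC : 0 ≤ C)
    (hle : ∀ᵐ ω ∂μ, ‖g ω‖ ≤ C * ‖h ω‖) : ‖g‖ ≤ C * ‖h‖ := by
  rw [Lp.norm_def, Lp.norm_def]
  have h1 : eLpNorm (⇑g) 2 μ ≤ eLpNorm (C • ⇑h) 2 μ := by
    refine eLpNorm_mono_ae ?_
    filter_upwards [hle] with ω hω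
    simpa [Real.norm_eq_abs, abs_mul, abs_of_nonneg hC] using hω
  rw [eLpNorm_const_smul] at h1
  have h2 : (eLpNorm (⇑g) 2 μ).toReal ≤ ((‖C‖₊ : ENNReal) • eLpNorm (⇑h) 2 μ).toReal := by
    refine ENNReal.toReal_mono ?_ h1
    exact ENNReal.mul_ne_top ENNReal.coe_ne_top (Lp.eLpNorm_ne_top h)
  refine h2.trans_eq ?_
  rw [smul_eq_mul, ENNReal.toReal_mul, ENNReal.coe_toReal,
    coe_nnnorm, Real.norm_eq_abs, abs_of_nonneg hC]

/-- Spectral model: `U^α` is multiplication by `(Λ+α)⁻¹` (the `α`-resolvent) and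
`J t = 𝒥^α_t f` is multiplication of `f` by `(Λ+α)⁻¹ exp (-(t/(Λ+α)))`.  Then
`J` is the unique `L²(m)`-valued solution of the Cauchy problem
`dj/dt = -U^α j`, `j(0) = U^α f`. -/
theorem stmt_11
    {Ω : Type*} [MeasurableSpace Ω] (μ : Measure Ω)
    (Λ : Ω → ℝ) (hΛmeas : Measurable Λ) (hΛnonneg : ∀ ω, 0 ≤ Λ ω)
    (α : ℝ) (hα : 0 < α) (f : Lp ℝ 2 μ)
    (Uα : Lp ℝ 2 μ →L[ℝ] Lp ℝ 2 μ)
    (hU : ∀ h : Lp ℝ 2 μ, ⇑(Uα h) =ᵐ[μ] fun ω => (Λ ω + α)⁻¹ * h ω)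
    (J : ℝ → Lp ℝ 2 μ)
    (hJ : ∀ t, ⇑(J t) =ᵐ[μ]
      fun ω => (Λ ω + α)⁻¹ * Real.exp (-(t / (Λ ω + α))) * f ω) :
    J 0 = Uα f ∧
    (∀ t ∈ Set.Ici (0:ℝ), HasDerivWithinAt J (-(Uα (J t))) (Set.Ici 0) t) ∧
    (∀ k : ℝ → Lp ℝ 2 μ, k 0 = Uα f →
      (∀ t ∈ Set.Ici (0:ℝ), HasDerivWithinAt k (-(Uα (k t))) (Set.Ici 0) t) →
      ∀ t ∈ Set.Ici (0:ℝ), k t = J t) := by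
  have hpos : ∀ ω, (0:ℝ) < Λ ω + α := fun ω => by have := hΛnonneg ω; linarith
  have hcle : ∀ ω, (Λ ω + α)⁻¹ ≤ α⁻¹ := fun ω => by
    apply inv_anti₀ hα; have := hΛnonneg ω; linarith
  have hcpos : ∀ ω, (0:ℝ) < (Λ ω + α)⁻¹ := fun ω => inv_pos.mpr (hpos ω)
  -- initial condition
  have hinit : J 0 = Uα f := by
    apply Lp.ext
    filter_upwards [hJ 0, hU f] with ω h1 h2
    rw [h1, h2]
    simp
  -- the key quantitative estimate
  have hkey : ∀ s t : ℝ, 0 ≤ s → 0 ≤ t →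
      ‖J s - J t + (s - t) • Uα (J t)‖ ≤ (α⁻¹ ^ 3 * ‖f‖) * (s - t) ^ 2 := by
    intro s t hs ht
    have hC : (0:ℝ) ≤ α⁻¹ ^ 3 * (s - t) ^ 2 := by positivity
    have := Lp_norm_le_of_ae_le (μ := μ) (J s - J t + (s - t) • Uα (J t)) f hC ?_
    · calc ‖J s - J t + (s - t) • Uα (J t)‖
          ≤ α⁻¹ ^ 3 * (s - t) ^ 2 * ‖f‖ := this
        _ = (α⁻¹ ^ 3 * ‖f‖) * (s - t) ^ 2 := by ring
    · filter_upwards [Lp.coeFn_add (J s - J t) ((s - t) • Uα (J t)),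
        Lp.coeFn_sub (J s) (J t), Lp.coeFn_smul (s - t) (Uα (J t)),
        hJ s, hJ t, hU (J t)] with ω ha hb hc h1 h2 h3
      rw [ha, Pi.add_apply, hb, Pi.sub_apply, hc, Pi.smul_apply, h1, h2, h3, h2]
      set c := (Λ ω + α)⁻¹ with hcdef
      have hc0 : 0 < c := hcpos ω
      have hca : c ≤ α⁻¹ := hcle ω
      have hx : s / (Λ ω + α) = s * c := div_eq_mul_inv _ _
      have hy : t / (Λ ω + α) = t * c := div_eq_mul_inv _ _
      rw [hx, hy]
      have key := exp_taylor_bound (x := s * c) (y := t * c)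
        (by positivity) (by positivity)
      have hexpand : c * Real.exp (-(s * c)) * f ω - c * Real.exp (-(t * c)) * f ω
          + (s - t) • (c * (c * Real.exp (-(t * c)) * f ω))
          = c * ((Real.exp (-(s * c)) - Real.exp (-(t * c))
              + (s * c - t * c) * Real.exp (-(t * c))) * f ω) := by
        simp only [smul_eq_mul]; ring
      rw [hexpand]
      rw [Real.norm_eq_abs, abs_mul, abs_mul, abs_of_pos hc0]
      have h1' : |Real.exp (-(s * c)) - Real.exp (-(t * c))
          + (s * c - t * c) * Real.exp (-(t * c))| ≤ c ^ 2 * (s - t) ^ 2 := by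
        refine key.trans_eq ?_; ring
      have hc3 : c * (c ^ 2 * (s - t) ^ 2) ≤ α⁻¹ ^ 3 * (s - t) ^ 2 := by
        have : c ^ 3 ≤ α⁻¹ ^ 3 := pow_le_pow_left₀ hc0.le hca 3
        nlinarith [sq_nonneg (s - t)]
      calc c * (|Real.exp (-(s * c)) - Real.exp (-(t * c))
          + (s * c - t * c) * Real.exp (-(t * c))| * |f ω|)
          ≤ c * ((c ^ 2 * (s - t) ^ 2) * |f ω|) := by
            apply mul_le_mul_of_nonneg_left _ hc0.le
            exact mul_le_mul_of_nonneg_right h1' (abs_nonneg _)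
        _ ≤ α⁻¹ ^ 3 * (s - t) ^ 2 * |f ω| := by
            rw [← mul_assoc]
            exact mul_le_mul_of_nonneg_right hc3 (abs_nonneg _)
        _ = α⁻¹ ^ 3 * (s - t) ^ 2 * ‖f ω‖ := by rw [Real.norm_eq_abs]
  -- the derivative
  have hderiv : ∀ t ∈ Set.Ici (0:ℝ), HasDerivWithinAt J (-(Uα (J t))) (Set.Ici 0) t := by
    intro t ht
    rw [hasDerivWithinAt_iff_isLittleO]
    rw [Asymptotics.isLittleO_iff]
    intro ε hε
    set C : ℝ := α⁻¹ ^ 3 * ‖f‖ with hCdef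
    have hC0 : 0 ≤ C := by positivity
    have hev : ∀ᶠ s in nhdsWithin t (Set.Ici (0:ℝ)),
        |s - t| < ε / (C + 1) ∧ s ∈ Set.Ici (0:ℝ) := by
      refine Filter.Eventually.and ?_ self_mem_nhdsWithin
      apply mem_nhdsWithin_of_mem_nhds
      have : Continuous fun s : ℝ => |s - t| := (continuous_id.sub continuous_const).abs
      have hlt : |t - t| < ε / (C + 1) := by simp; positivity
      exact this.continuousAt.eventually_lt continuousAt_const hlt
    filter_upwards [hev] with s hsev
    obtain ⟨hs1, hs2⟩ := hsev
    have hb := hkey s t hs2 ht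
    have : J s - J t - (s - t) • (-(Uα (J t))) = J s - J t + (s - t) • Uα (J t) := by
      rw [smul_neg]; abel
    rw [this]
    rw [Real.norm_eq_abs (s - t)]
    have hCpos : (0:ℝ) < C + 1 := by linarith
    have h1 : (s - t) ^ 2 = |s - t| * |s - t| := by rw [abs_mul_abs_self, sq]
    have h2 : C * (s - t) ^ 2 ≤ C * (ε / (C + 1) * |s - t|) := by
      rw [h1]
      exact mul_le_mul_of_nonneg_left
        (mul_le_mul_of_nonneg_right hs1.le (abs_nonneg _)) hC0
    have h3 : C * (ε / (C + 1)) ≤ ε := by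
      rw [mul_div_assoc', div_le_iff₀ hCpos]; nlinarith
    have h4 : C * (ε / (C + 1) * |s - t|) ≤ ε * |s - t| := by
      rw [← mul_assoc]
      exact mul_le_mul_of_nonneg_right h3 (abs_nonneg _)
    exact hb.trans (h2.trans h4)
  refine ⟨hinit, hderiv, ?_⟩
  -- uniqueness
  intro k hk0 hk' t ht
  have hv : ∀ s : ℝ, LipschitzWith ‖-Uα‖₊ fun x : Lp ℝ 2 μ => -(Uα x) := by
    intro s
    have := (-Uα).lipschitz
    exact this
  have hkcont : ContinuousOn k (Set.Icc 0 t) := fun u hu =>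
    ((hk' u hu.1).continuousWithinAt).mono (fun x hx => hx.1)
  have hJcont : ContinuousOn J (Set.Icc 0 t) := fun u hu =>
    ((hderiv u hu.1).continuousWithinAt).mono (fun x hx => hx.1)
  have hk'' : ∀ u ∈ Set.Ico (0:ℝ) t,
      HasDerivWithinAt k (-(Uα (k u))) (Set.Ici u) u := fun u hu =>
    (hk' u hu.1).mono (Set.Ici_subset_Ici.mpr hu.1)
  have hJ'' : ∀ u ∈ Set.Ico (0:ℝ) t,
      HasDerivWithinAt J (-(Uα (J u))) (Set.Ici u) u := fun u hu =>
    (hderiv u hu.1).mono (Set.Ici_subset_Ici.mpr hu.1)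
  have h0 : k 0 = J 0 := by rw [hk0, hinit]
  exact ODE_solution_unique (v := fun _ x => -(Uα x)) hv hkcont hk'' hJcont hJ'' h0
    ⟨ht, le_refl t⟩
end

section
/- Fix t > 0, γ ∈ (0,1) and g ∈ L²(m). Then f := ∫₀^∞ (γ e^{λt} + (1-γ)e^{-λt})^{-1} dE_λ g is the unique element of L²(m) satisfying (1-γ)P_t f + γ P_t^{-1} f = g; moreover f lies in the range of P_t, and (1-γ)f is the unique minimizer over h ∈ L²(m) of the Tikhonov functional ‖P_t h − g‖² + (γ/(1-γ))‖h‖². -/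
open MeasureTheory Real
open scoped RealInnerProductSpace

/-- Spectral model: `P` is the (bounded, self-adjoint) operator `P_t`, multiplication
by `exp (-(tΛ))`, and `P_t⁻¹ f` is multiplication by `exp (tΛ)` (defined when the
result is in `L²`).  For `γ ∈ (0,1)` and any `g ∈ L²(m)` there is a unique
`f ∈ L²(m)` with `(1-γ) P_t f + γ P_t⁻¹ f = g`; it is given by
`f = ∫₀^∞ (γ e^{λt} + (1-γ) e^{-λt})⁻¹ dE_λ g`, lies in the range of `P_t`, and
`(1-γ) f` is the unique minimizer of the Tikhonov functional
`h ↦ ‖P_t h - g‖² + (γ/(1-γ)) ‖h‖²`. -/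
theorem stmt_18
    {Ω : Type*} [MeasurableSpace Ω] (μ : Measure Ω)
    (Λ : Ω → ℝ) (hΛmeas : Measurable Λ) (hΛnonneg : ∀ ω, 0 ≤ Λ ω)
    (t : ℝ) (ht : 0 < t) (γ : ℝ) (hγ : γ ∈ Set.Ioo (0:ℝ) 1)
    (P : Lp ℝ 2 μ →L[ℝ] Lp ℝ 2 μ)
    (hP : ∀ f : Lp ℝ 2 μ, ⇑(P f) =ᵐ[μ] fun ω => Real.exp (-(t * Λ ω)) * f ω)
    (g : Lp ℝ 2 μ) :
    ∃ f : Lp ℝ 2 μ,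
      (⇑f =ᵐ[μ] fun ω =>
        (γ * Real.exp (Λ ω * t) + (1 - γ) * Real.exp (-(Λ ω * t)))⁻¹ * g ω) ∧
      MemLp (fun ω => Real.exp (t * Λ ω) * f ω) 2 μ ∧
      ((fun ω => (1 - γ) * (Real.exp (-(t * Λ ω)) * f ω)
          + γ * (Real.exp (t * Λ ω) * f ω)) =ᵐ[μ] ⇑g) ∧
      (∀ f' : Lp ℝ 2 μ,
        MemLp (fun ω => Real.exp (t * Λ ω) * f' ω) 2 μ →
        ((fun ω => (1 - γ) * (Real.exp (-(t * Λ ω)) * f' ω)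
            + γ * (Real.exp (t * Λ ω) * f' ω)) =ᵐ[μ] ⇑g) →
        f' = f) ∧
      (∃ w : Lp ℝ 2 μ, (fun ω => Real.exp (-(t * Λ ω)) * w ω) =ᵐ[μ] ⇑f) ∧
      (∀ h : Lp ℝ 2 μ, h ≠ (1 - γ) • f →
        ‖P ((1 - γ) • f) - g‖ ^ 2 + γ / (1 - γ) * ‖(1 - γ) • f‖ ^ 2
          < ‖P h - g‖ ^ 2 + γ / (1 - γ) * ‖h‖ ^ 2) := by
  obtain ⟨hγ0, hγ1⟩ := hγ
  have h1γ : (0:ℝ) < 1 - γ := by linarith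
  set D : Ω → ℝ := fun ω => γ * Real.exp (Λ ω * t) + (1 - γ) * Real.exp (-(Λ ω * t)) with hDdef
  have hDpos : ∀ ω, 0 < D ω := fun ω => by
    have := Real.exp_pos (Λ ω * t); have := Real.exp_pos (-(Λ ω * t)); positivity
  have hDne : ∀ ω, D ω ≠ 0 := fun ω => (hDpos ω).ne'
  have hDgeγ : ∀ ω, γ ≤ D ω := by
    intro ω
    have h1 : (1:ℝ) ≤ Real.exp (Λ ω * t) :=
      Real.one_le_exp (mul_nonneg (hΛnonneg ω) ht.le)
    have h2 : 0 < Real.exp (-(Λ ω * t)) := Real.exp_pos _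
    show γ ≤ γ * Real.exp (Λ ω * t) + (1 - γ) * Real.exp (-(Λ ω * t))
    nlinarith
  have hDmeas : Measurable D := by
    apply Measurable.add
    · exact (((hΛmeas.mul_const t)).exp).const_mul γ
    · exact (((hΛmeas.mul_const t).neg).exp).const_mul (1 - γ)
  -- membership of the candidate function
  have hcg_meas : AEStronglyMeasurable (fun ω => (D ω)⁻¹ * g ω) μ :=
    (hDmeas.inv.aestronglyMeasurable).mul (Lp.aestronglyMeasurable g)
  have hbound : ∀ᵐ ω ∂μ, ‖(D ω)⁻¹ * g ω‖ ≤ γ⁻¹ * ‖g ω‖ := by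
    refine Filter.Eventually.of_forall fun ω => ?_
    rw [norm_mul]
    gcongr
    rw [Real.norm_eq_abs, abs_of_pos (inv_pos.mpr (hDpos ω))]
    exact inv_anti₀ hγ0 (hDgeγ ω)
  have hmem : MemLp (fun ω => (D ω)⁻¹ * g ω) 2 μ :=
    (Lp.memLp g).of_le_mul hcg_meas hbound
  set f : Lp ℝ 2 μ := hmem.toLp _ with hfdef
  have hf : ⇑f =ᵐ[μ] fun ω => (D ω)⁻¹ * g ω := hmem.coeFn_toLp
  -- membership of exp(tΛ) * f
  have hmem2 : MemLp (fun ω => Real.exp (t * Λ ω) * f ω) 2 μ := by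
    have hb2 : ∀ᵐ ω ∂μ, ‖Real.exp (t * Λ ω) * ((D ω)⁻¹ * g ω)‖ ≤ γ⁻¹ * ‖g ω‖ := by
      refine Filter.Eventually.of_forall fun ω => ?_
      have hkey : Real.exp (t * Λ ω) * (D ω)⁻¹ ≤ γ⁻¹ := by
        rw [mul_comm t, mul_inv_le_iff₀ (hDpos ω)]
        have h1 : γ⁻¹ * γ = 1 := inv_mul_cancel₀ hγ0.ne'
        have h2 : 0 ≤ γ⁻¹ * ((1 - γ) * Real.exp (-(Λ ω * t))) := by positivity
        have : γ⁻¹ * D ω = γ⁻¹ * γ * Real.exp (Λ ω * t)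
            + γ⁻¹ * ((1 - γ) * Real.exp (-(Λ ω * t))) := by
          simp only [hDdef]; ring
        rw [this, h1, one_mul]; linarith
      have hkn : 0 ≤ Real.exp (t * Λ ω) * (D ω)⁻¹ := by positivity
      calc ‖Real.exp (t * Λ ω) * ((D ω)⁻¹ * g ω)‖
          = (Real.exp (t * Λ ω) * (D ω)⁻¹) * ‖g ω‖ := by
            rw [← mul_assoc, norm_mul, Real.norm_eq_abs (Real.exp _ * _),
              abs_of_nonneg hkn]
        _ ≤ γ⁻¹ * ‖g ω‖ := by gcongr
    have hm : MemLp (fun ω => Real.exp (t * Λ ω) * ((D ω)⁻¹ * g ω)) 2 μ :=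
      (Lp.memLp g).of_le_mul
        (((hΛmeas.const_mul t).exp.aestronglyMeasurable).mul hcg_meas) hb2
    refine hm.ae_eq ?_
    filter_upwards [hf] with ω hω
    rw [hω]
  have hEe : ∀ ω, Real.exp (-(t * Λ ω)) = (Real.exp (Λ ω * t))⁻¹ := fun ω => by
    rw [mul_comm t, Real.exp_neg]
  have hEe2 : ∀ ω, Real.exp (-(Λ ω * t)) = (Real.exp (Λ ω * t))⁻¹ := fun ω =>
    Real.exp_neg _
  have hEt : ∀ ω, Real.exp (t * Λ ω) = Real.exp (Λ ω * t) := fun ω => by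
    rw [mul_comm t]
  refine ⟨f, hf, hmem2, ?_, ?_, ⟨hmem2.toLp _, ?_⟩, ?_⟩
  · -- the equation
    filter_upwards [hf] with ω hω
    rw [hω, hEe ω, hEt ω]
    have hEpos := Real.exp_pos (Λ ω * t)
    simp only [hDdef, hEe2 ω]
    field_simp
    ring
  · -- uniqueness
    intro f' _ heq
    refine Lp.ext ?_
    filter_upwards [heq, hf] with ω h1 h2
    rw [h2]
    rw [hEe ω, hEt ω] at h1
    have hEpos := Real.exp_pos (Λ ω * t)
    simp only [hDdef, hEe2 ω]
    rw [← h1]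
    field_simp
    ring
  · -- range of P_t
    filter_upwards [hmem2.coeFn_toLp] with ω hω
    rw [hω, ← mul_assoc, ← Real.exp_add]
    simp
  · -- minimizer
    intro h hne
    set c₀ : ℝ := γ / (1 - γ) with hc₀
    have hc₀pos : 0 < c₀ := div_pos hγ0 h1γ
    set h₀ : Lp ℝ 2 μ := (1 - γ) • f with hh₀
    -- self-adjointness of P
    have selfadj : ∀ u v : Lp ℝ 2 μ, ⟪P u, v⟫ = ⟪u, P v⟫ := by
      intro u v
      rw [L2.inner_def, L2.inner_def]
      refine integral_congr_ae ?_
      filter_upwards [hP u, hP v] with ω h1 h2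
      rw [RCLike.inner_apply, RCLike.inner_apply, h1, h2]
      simp only [starRingEnd_apply, star_trivial]
      ring
    -- the Euler-Lagrange equation
    have key : P (P h₀ - g) + c₀ • h₀ = 0 := by
      refine Lp.ext ?_
      filter_upwards [Lp.coeFn_add (P (P h₀ - g)) (c₀ • h₀), hP (P h₀ - g),
        Lp.coeFn_sub (P h₀) g, hP h₀, Lp.coeFn_smul c₀ h₀,
        Lp.coeFn_smul ((1:ℝ) - γ) f, hf, Lp.coeFn_zero (E := ℝ) (p := 2) (μ := μ)]
        with ω e1 e2 e3 e4 e5 e6 e7 e8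
      rw [e1, e8]
      simp only [Pi.add_apply, Pi.zero_apply]
      rw [e2, e3]
      simp only [Pi.sub_apply]
      rw [e4, e5]
      simp only [Pi.smul_apply, smul_eq_mul]
      have e6' : h₀ ω = (1 - γ) * f ω := by rw [hh₀, e6]; simp
      rw [e6', e7, hEe ω]
      have hEpos := Real.exp_pos (Λ ω * t)
      simp only [hDdef, hEe2 ω, hc₀]
      field_simp
      ring
    have cross : ∀ d : Lp ℝ 2 μ, ⟪P h₀ - g, P d⟫ + c₀ * ⟪h₀, d⟫ = 0 := by
      intro d
      rw [← selfadj (P h₀ - g) d, ← real_inner_smul_left, ← inner_add_left, key,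
        inner_zero_left]
    set d : Lp ℝ 2 μ := h - h₀ with hd
    have hdne : d ≠ 0 := sub_ne_zero.mpr hne
    have hh : h = h₀ + d := by rw [hd]; abel
    have hPh : P h - g = (P h₀ - g) + P d := by rw [hh, map_add]; abel
    rw [hPh, hh, norm_add_sq_real, norm_add_sq_real]
    have hcr := cross d
    have hdn0 : ‖d‖ ≠ 0 := norm_ne_zero_iff.mpr hdne
    have hdpos : 0 < ‖d‖ ^ 2 := by positivity
    have hPd : 0 ≤ ‖P d‖ ^ 2 := by positivity
    nlinarith [hc₀pos, hdpos, hPd, mul_pos hc₀pos hdpos]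
end

section
/- Let φ be as in the regularisation theorem and for γ ∈ (0,1) let f_γ = ∫₀^∞ (γφ(λ) + (1-γ)e^{-λt})^{-1} dE_λ g denote the solution of the regularised equation (1-γ)P_t f + γφ(-A)f = g. If g lies in the range of P_t (i.e. ∫₀^∞ e^{2λt} d(E_λ g, g) < ∞), then ‖f_γ − P_t^{-1} g‖ → 0 as γ → 0. -/
open MeasureTheory Real Filter
open scoped RealInnerProductSpace

/-- Spectral model: `fγ γ` is the solution of the regularised equation
`(1-γ) P_t f + γ φ(-A) f = g`, i.e. multiplication of `g` by
`(γφ(Λ) + (1-γ) exp (-(Λt)))⁻¹`, and `finv = P_t⁻¹ g` is multiplication of `g` by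
`exp (tΛ)` (which exists since `g` is in the range of `P_t`).  Then
`‖fγ γ - P_t⁻¹ g‖ → 0` as `γ → 0⁺`. -/
theorem stmt_19
    {Ω : Type*} [MeasurableSpace Ω] (μ : Measure Ω)
    (Λ : Ω → ℝ) (hΛmeas : Measurable Λ) (hΛnonneg : ∀ ω, 0 ≤ Λ ω)
    (φ : ℝ → ℝ) (hφcont : ContinuousOn φ (Set.Ici 0))
    (hφnonneg : ∀ x ≥ (0:ℝ), 0 ≤ φ x)
    (hφliminf : ∃ c > (0:ℝ), ∀ᶠ x in atTop, c ≤ φ x)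
    (t : ℝ) (ht : 0 < t)
    (hφbdd : ∃ C : ℝ, ∀ x ≥ (0:ℝ), Real.exp (-(t * x)) * φ x ≤ C)
    (g : Lp ℝ 2 μ)
    (fγ : ℝ → Lp ℝ 2 μ)
    (hfγ : ∀ γ ∈ Set.Ioo (0:ℝ) 1, ⇑(fγ γ) =ᵐ[μ]
      fun ω => (γ * φ (Λ ω) + (1 - γ) * Real.exp (-(Λ ω * t)))⁻¹ * g ω)
    (finv : Lp ℝ 2 μ)
    (hfinv : ⇑finv =ᵐ[μ] fun ω => Real.exp (t * Λ ω) * g ω) :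
    Tendsto (fun γ => ‖fγ γ - finv‖) (nhdsWithin 0 (Set.Ioo 0 1)) (nhds 0) := by
  set l := nhdsWithin (0:ℝ) (Set.Ioo 0 1) with hl
  set G : ℝ → Ω → ℝ := fun γ ω =>
    (((γ * φ (Λ ω) + (1 - γ) * Real.exp (-(Λ ω * t)))⁻¹ - Real.exp (t * Λ ω)) * g ω)^2
    with hG
  -- a.e. pointwise description of the difference
  have hdiff : ∀ γ ∈ Set.Ioo (0:ℝ) 1, ⇑(fγ γ - finv) =ᵐ[μ]
      fun ω => ((γ * φ (Λ ω) + (1 - γ) * Real.exp (-(Λ ω * t)))⁻¹ - Real.exp (t * Λ ω)) * g ω := by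
    intro γ hγ
    filter_upwards [hfγ γ hγ, hfinv, Lp.coeFn_sub (fγ γ) finv] with ω h1 h2 h3
    simp only [h3, Pi.sub_apply, h1, h2]; ring
  -- norms as square roots of integrals
  have hnorm : ∀ γ ∈ Set.Ioo (0:ℝ) 1, ‖fγ γ - finv‖ = Real.sqrt (∫ ω, G γ ω ∂μ) := by
    intro γ hγ
    have h1 : (inner ℝ (fγ γ - finv) (fγ γ - finv) : ℝ) = ∫ ω, G γ ω ∂μ := by
      rw [MeasureTheory.L2.inner_def]
      refine integral_congr_ae ?_
      filter_upwards [hdiff γ hγ] with ω h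
      simp only [h, RCLike.inner_apply, conj_trivial, hG]; ring
    rw [← Real.sqrt_sq (norm_nonneg (fγ γ - finv)), ← real_inner_self_eq_norm_sq, h1]
  -- measurability helper for φ ∘ Λ
  have hφ' : Continuous fun x => φ (max x 0) := by
    refine hφcont.comp_continuous (continuous_id.max continuous_const) fun x => ?_
    exact le_max_right x 0
  have hφΛ : Measurable fun ω => φ (Λ ω) := by
    have : (fun ω => φ (Λ ω)) = fun ω => φ (max (Λ ω) 0) := by
      funext ω; rw [max_eq_left (hΛnonneg ω)]
    rw [this]; exact hφ'.measurable.comp hΛmeas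
  -- integrable bound
  set B : Ω → ℝ := fun ω => (2 * Real.exp (t * Λ ω) * |g ω|)^2 with hB
  have hBint : Integrable B μ := by
    have hmem : MemLp (fun ω => Real.exp (t * Λ ω) * g ω) 2 μ :=
      (Lp.memLp finv).ae_eq hfinv
    have h2 : Integrable (fun ω => (Real.exp (t * Λ ω) * g ω)^2) μ := by
      simpa [sq] using hmem.integrable_sq
    have : Integrable (fun ω => 4 * (Real.exp (t * Λ ω) * g ω)^2) μ := h2.const_mul 4
    refine this.congr (Eventually.of_forall fun ω => ?_)
    simp only [hB, mul_pow, sq_abs]; ring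
  -- dominated convergence
  have hDCT : Tendsto (fun γ => ∫ ω, G γ ω ∂μ) l (nhds 0) := by
    have h0 : (0:ℝ) = ∫ (ω : Ω), (0:ℝ) ∂μ := by simp
    rw [h0]
    refine tendsto_integral_filter_of_dominated_convergence B ?_ ?_ hBint ?_
    · refine Eventually.of_forall fun γ => ?_
      have hm : Measurable fun ω =>
          (γ * φ (Λ ω) + (1 - γ) * Real.exp (-(Λ ω * t)))⁻¹ - Real.exp (t * Λ ω) := by
        refine Measurable.sub ?_ ?_
        · exact ((((hφΛ.const_mul γ).add
            (((hΛmeas.mul_const t).neg.exp).const_mul (1 - γ)))).inv)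
        · exact (hΛmeas.const_mul t).exp
      exact ((hm.aestronglyMeasurable.mul (Lp.aestronglyMeasurable g)).pow 2)
    · have hev : ∀ᶠ γ in l, γ ∈ Set.Ioo (0:ℝ) (1/2) := by
        have : Set.Ioo (0:ℝ) (1/2) ∈ l := by
          rw [hl, mem_nhdsWithin]
          exact ⟨Set.Iio (1/2), isOpen_Iio, by norm_num,
            fun x hx => ⟨hx.2.1, hx.1⟩⟩
        exact this
      filter_upwards [hev] with γ hγ
      refine Eventually.of_forall fun ω => ?_
      have hlam := hΛnonneg ω
      set e := Real.exp (-(Λ ω * t)) with he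
      have hepos : 0 < e := Real.exp_pos _
      have hE : Real.exp (t * Λ ω) = e⁻¹ := by
        rw [he, ← Real.exp_neg, neg_neg, mul_comm]
      have hφpos : 0 ≤ φ (Λ ω) := hφnonneg _ hlam
      have hγ1 : (1:ℝ)/2 ≤ 1 - γ := by linarith [hγ.2]
      have hd : (1 - γ) * e ≤ γ * φ (Λ ω) + (1 - γ) * e := by nlinarith [hγ.1.le]
      have hdpos : 0 < γ * φ (Λ ω) + (1 - γ) * e := by nlinarith
      have hDle : (γ * φ (Λ ω) + (1 - γ) * e)⁻¹ ≤ 2 * e⁻¹ := by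
        rw [inv_le_comm₀ hdpos (by positivity)]
        rw [← one_div, div_le_iff₀ (by positivity)]
        calc (1:ℝ) = (1/2) * (2 * e⁻¹ * e) := by field_simp
        _ ≤ (1 - γ) * (2 * e⁻¹ * e) := by
            apply mul_le_mul_of_nonneg_right hγ1; positivity
        _ ≤ (γ * φ (Λ ω) + (1 - γ) * e) * (2 * e⁻¹) := by
            rw [mul_comm (2 * e⁻¹) e, ← mul_assoc]
            exact mul_le_mul_of_nonneg_right hd (by positivity)
      have hDpos : 0 < (γ * φ (Λ ω) + (1 - γ) * e)⁻¹ := by positivity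
      have habs : |((γ * φ (Λ ω) + (1 - γ) * e)⁻¹ - e⁻¹)| ≤ 2 * e⁻¹ := by
        rw [abs_le]
        constructor
        · have : (0:ℝ) < e⁻¹ := by positivity
          nlinarith
        · have : (0:ℝ) < e⁻¹ := by positivity
          nlinarith
      have hge : ‖G γ ω‖ = G γ ω := Real.norm_of_nonneg (sq_nonneg _)
      rw [hge]
      simp only [hG, hB, hE]
      have hsq : ((γ * φ (Λ ω) + (1 - γ) * e)⁻¹ - e⁻¹)^2 ≤ (2 * e⁻¹)^2 := by
        have h := abs_le.mp habs
        exact sq_le_sq' h.1 h.2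
      calc (((γ * φ (Λ ω) + (1 - γ) * e)⁻¹ - e⁻¹) * g ω)^2
          = ((γ * φ (Λ ω) + (1 - γ) * e)⁻¹ - e⁻¹)^2 * (g ω)^2 := by ring
        _ ≤ (2 * e⁻¹)^2 * (g ω)^2 := mul_le_mul_of_nonneg_right hsq (sq_nonneg _)
        _ = (2 * e⁻¹ * |g ω|)^2 := by rw [mul_pow (2 * e⁻¹), sq_abs]
    · refine Eventually.of_forall fun ω => ?_
      have hlam := hΛnonneg ω
      have hepos : (0:ℝ) < Real.exp (-(Λ ω * t)) := Real.exp_pos _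
      have hc : ContinuousAt (fun γ : ℝ =>
          (((γ * φ (Λ ω) + (1 - γ) * Real.exp (-(Λ ω * t)))⁻¹ - Real.exp (t * Λ ω)) * g ω)^2)
          0 := by
        have hden : ContinuousAt (fun γ : ℝ => γ * φ (Λ ω) + (1 - γ) * Real.exp (-(Λ ω * t))) 0 := by
          fun_prop
        have hne : (0:ℝ) * φ (Λ ω) + (1 - 0) * Real.exp (-(Λ ω * t)) ≠ 0 := by
          simp
        exact (((hden.inv₀ hne).sub continuousAt_const).mul continuousAt_const).pow 2
      have h0 : (((0:ℝ) * φ (Λ ω) + (1 - 0) * Real.exp (-(Λ ω * t)))⁻¹ - Real.exp (t * Λ ω)) * g ω = 0 := by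
        rw [show ((0:ℝ) * φ (Λ ω) + (1 - 0) * Real.exp (-(Λ ω * t))) = Real.exp (-(Λ ω * t)) by ring,
          ← Real.exp_neg, neg_neg, mul_comm (Λ ω) t]
        ring
      have htend : Tendsto (fun γ : ℝ =>
          (((γ * φ (Λ ω) + (1 - γ) * Real.exp (-(Λ ω * t)))⁻¹ - Real.exp (t * Λ ω)) * g ω)^2)
          (nhds 0) (nhds 0) := by
        convert hc.tendsto using 2
        rw [h0]
        norm_num
      exact htend.mono_left (by rw [hl]; exact nhdsWithin_le_nhds)
  -- conclude
  have hsqrt : Tendsto (fun γ => Real.sqrt (∫ ω, G γ ω ∂μ)) l (nhds 0) := by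
    have := (Real.continuous_sqrt.continuousAt (x := (0:ℝ))).tendsto.comp hDCT
    rw [Real.sqrt_zero] at this; exact this
  refine hsqrt.congr' ?_
  filter_upwards [self_mem_nhdsWithin] with γ hγ
  exact (hnorm γ hγ).symm
end
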